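/- Under the Yule model with n leaves, for k ≤ l the covariance of F-matrix entries in the same row satisfies Cov(F_{n-1,k-1}, F_{n-1,l-1}) = k(k-1)[l(l+1) + n(n-2l-1)] / ((n-1)²(n-2)). -/

import Mathlib

open scoped Classical

/-- Collapse the pair of lineage labels `{a, b}`: the larger label is merged
into the smaller one and all larger labels are shifted down by one. -/
def collapse (a b x : ℕ) : ℕ :=
  if x = max a b then min a b else if max a b < x then x - 1 else x

/-- The lineage map of the coalescent after `s` merge events: `chainMap n ω s i`
is the label of the lineage currently containing leaf `i`, where `ω` lists the
pair of lineages merged at each step. -/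
def chainMap (n : ℕ) (ω : Fin (n - 1) → Fin n × Fin n) : ℕ → Fin n → ℕ
  | 0 => fun i => (i : ℕ)
  | s + 1 => fun i =>
      if h : s < n - 1 then
        collapse ((ω ⟨s, h⟩).1 : ℕ) ((ω ⟨s, h⟩).2 : ℕ) (chainMap n ω s i)
      else chainMap n ω s i

/-- `ω` is a valid sequence of coalescent merge choices: at step `s` (when
`n - s` lineages remain) an unordered pair of the `n - s` current lineages is
chosen. -/
def ValidSeq (n : ℕ) (ω : Fin (n - 1) → Fin n × Fin n) : Prop :=
  ∀ s : Fin (n - 1), ((ω s).1 : ℕ) < ((ω s).2 : ℕ) ∧ ((ω s).2 : ℕ) < n - (s : ℕ)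

/-- The sample space of the Yule / Kingman coalescent with `n` leaves: all
sequences of merge choices, each such sequence being equally likely (at every
step a uniformly chosen pair of the extant lineages merges). -/
noncomputable def coalSpace (n : ℕ) : Finset (Fin (n - 1) → Fin n × Fin n) :=
  Finset.univ.filter (ValidSeq n)

/-- The block (set of leaves) of the lineage containing leaf `i` when `k`
lineages remain. -/
noncomputable def blockOf (n : ℕ) (ω : Fin (n - 1) → Fin n × Fin n) (k : ℕ)
    (i : Fin n) : Finset (Fin n) :=
  Finset.univ.filter (fun j => chainMap n ω (n - k) j = chainMap n ω (n - k) i)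

/-- `Zext n ω i k`: leaf `i` is still an external branch (a singleton lineage)
when `k` lineages remain. -/
def Zext (n : ℕ) (ω : Fin (n - 1) → Fin n × Fin n) (i : Fin n) (k : ℕ) : Prop :=
  blockOf n ω k i = {i}

/-- The partition (set of blocks) of the leaves when `k` lineages remain. -/
noncomputable def blocksAt (n : ℕ) (ω : Fin (n - 1) → Fin n × Fin n) (k : ℕ) :
    Finset (Finset (Fin n)) :=
  Finset.univ.image (fun i => blockOf n ω k i)

/-- The F-matrix of the ranked tree shape generated by the coalescent `ω`:
`FmatOf n ω i j` is the number of branches extant when `j + 1` branches are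
present that have not yet bifurcated by the interval with `i + 1` branches,
i.e. the number of common blocks of the partitions into `j + 1` and `i + 1`
lineages. -/
noncomputable def FmatOf (n : ℕ) (ω : Fin (n - 1) → Fin n × Fin n) (i j : ℕ) : ℕ :=
  (blocksAt n ω (j + 1) ∩ blocksAt n ω (i + 1)).card

/-- The D-matrix entry `D i j = F i j - F i (j-1)`: the number of children of
the node creating the `(j+1)`-st branch that have not bifurcated by interval
`i`. -/
noncomputable def DmatOf (n : ℕ) (ω : Fin (n - 1) → Fin n × Fin n) (i j : ℕ) : ℤ :=
  (FmatOf n ω i j : ℤ) - (FmatOf n ω i (j - 1) : ℤ)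

/-- Probability of an event under the Yule / Kingman coalescent with `n`
leaves (uniform measure on merge-choice sequences). -/
noncomputable def coalP (n : ℕ) (A : (Fin (n - 1) → Fin n × Fin n) → Prop) : ℝ :=
  (((coalSpace n).filter A).card : ℝ) / ((coalSpace n).card : ℝ)

/-- Expectation of a random variable under the Yule / Kingman coalescent with
`n` leaves. -/
noncomputable def coalE (n : ℕ) (X : (Fin (n - 1) → Fin n × Fin n) → ℝ) : ℝ :=
  (∑ ω ∈ coalSpace n, X ω) / ((coalSpace n).card : ℝ)


section CollapseLemmas

variable {a b x y m : ℕ}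

lemma collapse_def (hab : a < b) (x : ℕ) :
    collapse a b x = if x = b then a else if b < x then x - 1 else x := by
  simp [collapse, Nat.max_eq_right hab.le, Nat.min_eq_left hab.le]

lemma collapse_lt (hab : a < b) (hb : b < m) (hx : x < m) :
    collapse a b x < m - 1 := by
  rw [collapse_def hab]
  split_ifs with h1 h2 <;> omega

lemma collapse_surj (hab : a < b) (hb : b < m) (hy : y < m - 1) :
    ∃ x < m, collapse a b x = y := by
  rcases lt_or_ge y b with h | h
  · exact ⟨y, by omega, by rw [collapse_def hab]; split_ifs <;> omega⟩
  · exact ⟨y + 1, by omega, by rw [collapse_def hab]; split_ifs <;> omega⟩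

lemma collapse_inj (hab : a < b) (hx : x ≠ b) (hy : y ≠ b)
    (h : collapse a b x = collapse a b y) : x = y := by
  rw [collapse_def hab, collapse_def hab] at h
  split_ifs at h <;> omega

lemma collapse_ne_a (hab : a < b) (hx1 : x ≠ a) (hx2 : x ≠ b) :
    collapse a b x ≠ a := by
  rw [collapse_def hab]; split_ifs <;> omega

lemma collapse_b (hab : a < b) : collapse a b b = a := by
  rw [collapse_def hab]; simp

lemma collapse_a (hab : a < b) : collapse a b a = a := by
  rw [collapse_def hab]; split_ifs <;> omega

end CollapseLemmas

section ChainLemmas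

variable {n : ℕ} {ω ω' : Fin (n - 1) → Fin n × Fin n}

/-- validity of `ω` at all steps before `t`. -/
def ValidBelow (n : ℕ) (ω : Fin (n - 1) → Fin n × Fin n) (t : ℕ) : Prop :=
  ∀ s (hs : s < n - 1), s < t →
    ((ω ⟨s, hs⟩).1 : ℕ) < ((ω ⟨s, hs⟩).2 : ℕ) ∧ ((ω ⟨s, hs⟩).2 : ℕ) < n - s

lemma validSeq_validBelow (h : ValidSeq n ω) (t : ℕ) : ValidBelow n ω t :=
  fun s hs _ => h ⟨s, hs⟩

lemma chainMap_lt (h : ValidBelow n ω t) (ht : t ≤ n - 1) (i : Fin n) :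
    chainMap n ω t i < n - t := by
  induction t with
  | zero => simpa [chainMap] using i.2
  | succ s ih =>
    have hs : s < n - 1 := by omega
    have hv := h s hs (by omega)
    have hprev := ih (fun s' hs' h' => h s' hs' (by omega)) (by omega)
    have : chainMap n ω (s+1) i
        = collapse ((ω ⟨s, hs⟩).1 : ℕ) ((ω ⟨s, hs⟩).2 : ℕ) (chainMap n ω s i) := by
      simp [chainMap, hs]
    rw [this]
    have := collapse_lt hv.1 hv.2 hprev
    omega

lemma chainMap_surj (h : ValidBelow n ω t) (ht : t ≤ n - 1) {y : ℕ}
    (hy : y < n - t) : ∃ i : Fin n, chainMap n ω t i = y := by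
  induction t generalizing y with
  | zero => exact ⟨⟨y, by omega⟩, rfl⟩
  | succ s ih =>
    have hs : s < n - 1 := by omega
    have hv := h s hs (by omega)
    obtain ⟨x, hx, hcx⟩ := collapse_surj hv.1 hv.2 (m := n - s) (y := y) (by omega)
    obtain ⟨i, hi⟩ := ih (fun s' hs' h' => h s' hs' (by omega)) (by omega) (hx)
    refine ⟨i, ?_⟩
    simp only [chainMap, hs, dif_pos, hi, hcx]

end ChainLemmas

section ExtLemmas

variable {n : ℕ} {ω ω' : Fin (n - 1) → Fin n × Fin n} {t : ℕ} {i j : Fin n}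

/-- the pair of labels merged at step `s`, as a finset. -/
noncomputable def mergePair (n : ℕ) (ω : Fin (n - 1) → Fin n × Fin n) (s : ℕ) :
    Finset ℕ :=
  if h : s < n - 1 then {((ω ⟨s, h⟩).1 : ℕ), ((ω ⟨s, h⟩).2 : ℕ)} else ∅

lemma validBelow_mono {t' : ℕ} (h : ValidBelow n ω t) (htt : t' ≤ t) :
    ValidBelow n ω t' := fun s hs h' => h s hs (by omega)

lemma chainMap_congr (h : ∀ s' (h : s' < n - 1), s' < t → ω ⟨s', h⟩ = ω' ⟨s', h⟩)
    (i : Fin n) : chainMap n ω t i = chainMap n ω' t i := by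
  induction t with
  | zero => rfl
  | succ s ih =>
    by_cases hs : s < n - 1
    · have hω := h s hs (by omega)
      simp only [chainMap, hs, dif_pos, hω,
        ih (fun s' h' hlt => h s' h' (by omega))]
    · simp only [chainMap, hs, dif_neg, not_false_iff,
        ih (fun s' h' hlt => h s' h' (by omega))]

/-- leaf `i` is in a singleton block after `t` merge steps. -/
def ExtBr (n : ℕ) (ω : Fin (n - 1) → Fin n × Fin n) (t : ℕ) (i : Fin n) : Prop :=
  ∀ j, chainMap n ω t j = chainMap n ω t i → j = i

lemma ext_succ (h : ValidBelow n ω (t + 1)) (ht : t + 1 ≤ n - 1) (i : Fin n) :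
    ExtBr n ω (t + 1) i ↔ ExtBr n ω t i ∧ chainMap n ω t i ∉ mergePair n ω t := by
  have hs : t < n - 1 := by omega
  set a := ((ω ⟨t, hs⟩).1 : ℕ) with ha
  set b := ((ω ⟨t, hs⟩).2 : ℕ) with hb
  have hv := h t hs (by omega)
  have hstep : ∀ j : Fin n,
      chainMap n ω (t + 1) j = collapse a b (chainMap n ω t j) := by
    intro j; simp [chainMap, hs]; rfl
  have hmp : mergePair n ω t = {a, b} := by simp [mergePair, hs]; rfl
  have hvb : ValidBelow n ω t := validBelow_mono h (by omega)
  constructor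
  · intro hE
    have hExt : ExtBr n ω t i := fun j hj => hE j (by rw [hstep, hstep, hj])
    refine ⟨hExt, ?_⟩
    rw [hmp]
    simp only [Finset.mem_insert, Finset.mem_singleton]
    rintro (hia | hib)
    · obtain ⟨j, hj⟩ := chainMap_surj hvb (by omega) (hv.2 : b < n - t)
      have hji : j ≠ i := fun e => by
        rw [e, hia] at hj; omega
      refine hji (hE j ?_)
      rw [hstep, hstep, hj, hia, collapse_b hv.1, collapse_a hv.1]
    · obtain ⟨j, hj⟩ := chainMap_surj hvb (by omega)
        (show a < n - t by omega)
      have hji : j ≠ i := fun e => by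
        rw [e, hib] at hj; omega
      refine hji (hE j ?_)
      rw [hstep, hstep, hj, hib, collapse_b hv.1, collapse_a hv.1]
  · rintro ⟨hExt, havoid⟩ j hj
    rw [hmp] at havoid
    simp only [Finset.mem_insert, Finset.mem_singleton, not_or] at havoid
    rw [hstep, hstep] at hj
    by_cases hjb : chainMap n ω t j = b
    · exfalso
      rw [hjb, collapse_b hv.1] at hj
      exact collapse_ne_a hv.1 havoid.1 havoid.2 hj.symm
    · exact hExt j (collapse_inj hv.1 hjb havoid.2 hj)

lemma ext_iff_avoid (h : ValidBelow n ω t) (ht : t ≤ n - 1) (i : Fin n) :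
    ExtBr n ω t i ↔ ∀ s < t, chainMap n ω s i ∉ mergePair n ω s := by
  induction t with
  | zero =>
    constructor
    · intro _ s hs; omega
    · intro _ j hj; exact Fin.ext hj
  | succ u ih =>
    rw [ext_succ h ht i, ih (validBelow_mono h (by omega)) (by omega)]
    constructor
    · rintro ⟨h1, h2⟩ s hst
      rcases Nat.lt_succ_iff_lt_or_eq.1 hst with h' | h'
      · exact h1 s h'
      · rw [h']; exact h2
    · intro h1
      exact ⟨fun s hs => h1 s (by omega), h1 u (by omega)⟩

lemma chainMap_ne_of_avoid (h : ValidBelow n ω t) (ht : t ≤ n - 1) (hij : i ≠ j)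
    (hav : ∀ s < t, chainMap n ω s i ∉ mergePair n ω s ∧
      chainMap n ω s j ∉ mergePair n ω s) :
    chainMap n ω t i ≠ chainMap n ω t j := by
  induction t with
  | zero =>
    simp only [chainMap]
    exact fun e => hij (Fin.ext e)
  | succ u ih =>
    have hs : u < n - 1 := by omega
    have hv := h u hs (by omega)
    have hmp : mergePair n ω u = {((ω ⟨u, hs⟩).1 : ℕ), ((ω ⟨u, hs⟩).2 : ℕ)} := by
      simp [mergePair, hs]
    have havu := hav u (by omega)
    rw [hmp] at havu
    simp only [Finset.mem_insert, Finset.mem_singleton, not_or] at havu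
    have hprev := ih (validBelow_mono h (by omega)) (by omega)
      (fun s hsu => hav s (by omega))
    intro e
    simp only [chainMap, hs, dif_pos] at e
    exact hprev (collapse_inj hv.1 havu.1.2 havu.2.2 e)

lemma zext_iff_ext (k : ℕ) : Zext n ω i k ↔ ExtBr n ω (n - k) i := by
  constructor
  · intro h j hj
    have : j ∈ blockOf n ω k i := by simp [blockOf, hj]
    rw [h] at this
    simpa using this
  · intro h
    ext j
    simp only [blockOf, Finset.mem_filter, Finset.mem_univ, true_and,
      Finset.mem_singleton]
    exact ⟨fun hj => h j hj, fun hj => by rw [hj]⟩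

end ExtLemmas

section FmatLemmas

variable {n : ℕ} {ω : Fin (n - 1) → Fin n × Fin n}

lemma mem_blockOf_self (k : ℕ) (i : Fin n) : i ∈ blockOf n ω k i := by
  simp [blockOf]

lemma blockOf_top (i : Fin n) : blockOf n ω n i = {i} := by
  ext j
  simp only [blockOf, Nat.sub_self, Finset.mem_filter, Finset.mem_univ, true_and,
    Finset.mem_singleton]
  exact ⟨fun h => Fin.ext h, fun h => by rw [h]⟩

lemma fmat_card (hk : 1 ≤ k) (hn : 1 ≤ n) :
    FmatOf n ω (n - 1) (k - 1)
      = (Finset.univ.filter (fun i => Zext n ω i k)).card := by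
  have h1 : k - 1 + 1 = k := by omega
  have h2 : n - 1 + 1 = n := by omega
  rw [FmatOf, h1, h2]
  refine (Finset.card_nbij (fun i => ({i} : Finset (Fin n))) ?_ ?_ ?_).symm
  · intro i hi
    simp only [Finset.mem_coe, Finset.mem_filter, Finset.mem_univ, true_and] at hi
    simp only [Finset.mem_coe, Finset.mem_inter, blocksAt, Finset.mem_image]
    exact ⟨⟨i, Finset.mem_univ i, hi⟩, ⟨i, Finset.mem_univ i, blockOf_top i⟩⟩
  · intro i _ j _ hij
    exact Finset.singleton_inj.1 hij
  · intro S hS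
    simp only [Finset.coe_inter, Set.mem_inter_iff, Finset.mem_coe,
      Finset.mem_inter, blocksAt, Finset.mem_image] at hS
    obtain ⟨⟨j', _, hj'⟩, ⟨j, _, hj⟩⟩ := hS
    rw [blockOf_top] at hj
    have hj'm : j' ∈ S := by rw [← hj']; exact mem_blockOf_self k j'
    rw [← hj] at hj'm
    have : j' = j := by simpa using hj'm
    subst this
    refine ⟨j', ?_, hj⟩
    simp only [Finset.coe_filter, Finset.mem_univ, true_and, Set.mem_setOf_eq]
    rw [Zext, hj', ← hj]

end FmatLemmas

section PairCount

variable {n m : ℕ} {g : Finset ℕ}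

/-- valid merge pairs among `m` lineages avoiding the labels in `g`. -/
noncomputable def pairSet (n : ℕ) (g : Finset ℕ) (m : ℕ) : Finset (Fin n × Fin n) :=
  Finset.univ.filter (fun p => ((p.1 : ℕ) < (p.2 : ℕ) ∧ (p.2 : ℕ) < m) ∧
    (p.1 : ℕ) ∉ g ∧ (p.2 : ℕ) ∉ g)

lemma pairSet_card (hm : m ≤ n) (hg : ∀ x ∈ g, x < m) :
    (pairSet n g m).card = Nat.choose (m - g.card) 2 := by
  classical
  set S : Finset (Fin n) :=
    Finset.univ.filter (fun x => (x : ℕ) < m ∧ (x : ℕ) ∉ g) with hS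
  have hmemS : ∀ x : Fin n, x ∈ S ↔ (x : ℕ) < m ∧ (x : ℕ) ∉ g := by
    intro x; simp [hS]
  have hcardS : S.card = m - g.card := by
    have h1 : S.card = (Finset.range m \ g).card := by
      refine Finset.card_nbij (fun x => (x : ℕ)) ?_ ?_ ?_
      · intro x hx
        rw [Finset.mem_coe, hmemS] at hx
        simp [Finset.mem_sdiff, Finset.mem_range, hx.1, hx.2]
      · intro x _ y _ h; exact Fin.ext h
      · intro v hv
        simp only [Finset.coe_sdiff, Set.mem_diff, Finset.mem_coe,
          Finset.mem_range] at hv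
        refine ⟨⟨v, by omega⟩, ?_, rfl⟩
        rw [Finset.mem_coe, hmemS]
        exact ⟨hv.1, hv.2⟩
    rw [h1, Finset.card_sdiff_of_subset (fun x hx => Finset.mem_range.2 (hg x hx)),
      Finset.card_range]
  have hbij : (pairSet n g m).card = (Finset.powersetCard 2 S).card := by
    refine Finset.card_nbij (fun p => ({p.1, p.2} : Finset (Fin n))) ?_ ?_ ?_
    · intro p hp
      simp only [Finset.mem_coe, pairSet, Finset.mem_filter, Finset.mem_univ, true_and] at hp
      have hne : p.1 ≠ p.2 := fun e => by rw [e] at hp; omega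
      simp only [Finset.mem_coe, Finset.mem_powersetCard]
      constructor
      · intro x hx
        simp only [Finset.mem_insert, Finset.mem_singleton] at hx
        rcases hx with h | h <;> subst h <;> rw [hmemS]
        · exact ⟨by omega, hp.2.1⟩
        · exact ⟨hp.1.2, hp.2.2⟩
      · rw [Finset.card_pair hne]
    · intro p hp q hq hpq
      simp only [Finset.mem_coe, pairSet, Finset.mem_filter, Finset.mem_univ,
        true_and] at hp hq
      simp only at hpq
      have h1 : p.1 ∈ ({q.1, q.2} : Finset (Fin n)) := by
        rw [← hpq]; simp
      have h2 : p.2 ∈ ({q.1, q.2} : Finset (Fin n)) := by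
        rw [← hpq]; simp
      have h3 : q.1 ∈ ({p.1, p.2} : Finset (Fin n)) := by
        rw [hpq]; simp
      simp only [Finset.mem_insert, Finset.mem_singleton] at h1 h2 h3
      have : p.1 = q.1 ∧ p.2 = q.2 := by
        rcases h1 with h1 | h1 <;> rcases h2 with h2 | h2 <;>
          rcases h3 with h3 | h3 <;>
          first
            | (exact ⟨h1, h2⟩)
            | (exfalso; rw [Fin.ext_iff] at h1 h2 h3; omega)
      exact Prod.ext this.1 this.2
    · intro u hu
      simp only [Finset.mem_coe, Finset.mem_powersetCard] at hu
      obtain ⟨x, y, hxy, rfl⟩ := Finset.card_eq_two.1 hu.2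
      have hx : x ∈ S := hu.1 (by simp)
      have hy : y ∈ S := hu.1 (by simp)
      rw [hmemS] at hx hy
      rcases lt_trichotomy (x : ℕ) (y : ℕ) with h | h | h
      · refine ⟨(x, y), ?_, rfl⟩
        simp only [Finset.mem_coe, pairSet, Finset.mem_filter, Finset.mem_univ,
          true_and]
        exact ⟨⟨h, hy.1⟩, hx.2, hy.2⟩
      · exact absurd (Fin.ext h) hxy
      · refine ⟨(y, x), ?_, ?_⟩
        · simp only [Finset.mem_coe, pairSet, Finset.mem_filter, Finset.mem_univ,
            true_and]
          exact ⟨⟨h, hx.1⟩, hy.2, hx.2⟩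
        · rw [Finset.pair_comm]
  rw [hbij, Finset.card_powersetCard, hcardS]

end PairCount

section Counting

variable {n : ℕ} {ω ω' : Fin (n - 1) → Fin n × Fin n}

/-- leaf `i` stays external for the first `t` steps, and leaf `j` for the
first `t1` steps. -/
def AvoidEvt (n : ℕ) (ω : Fin (n - 1) → Fin n × Fin n) (i j : Fin n)
    (t1 t : ℕ) : Prop :=
  ∀ s < t, chainMap n ω s i ∉ mergePair n ω s ∧
    (s < t1 → chainMap n ω s j ∉ mergePair n ω s)

noncomputable def cnt (n : ℕ) (i j : Fin n) (t1 t : ℕ) : ℕ :=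
  (Finset.univ.filter
    (fun ω : Fin (n - 1) → Fin n × Fin n =>
      ValidSeq n ω ∧ AvoidEvt n ω i j t1 t)).card

lemma mergePair_congr {s : ℕ}
    (h : ∀ (hs : s < n - 1), ω ⟨s, hs⟩ = ω' ⟨s, hs⟩) :
    mergePair n ω s = mergePair n ω' s := by
  unfold mergePair
  split_ifs with hs
  · rw [h hs]
  · rfl

lemma avoidEvt_congr {i j : Fin n} {t1 t : ℕ}
    (h : ∀ s' (hs' : s' < n - 1), s' < t → ω ⟨s', hs'⟩ = ω' ⟨s', hs'⟩) :
    AvoidEvt n ω i j t1 t ↔ AvoidEvt n ω' i j t1 t := by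
  unfold AvoidEvt
  apply forall_congr'; intro s
  apply imp_congr_right; intro hst
  rw [chainMap_congr (fun s' hs' h' => h s' hs' (by omega)) i,
    chainMap_congr (fun s' hs' h' => h s' hs' (by omega)) j,
    mergePair_congr (fun hs => h s hs hst)]

lemma avoidEvt_succ {i j : Fin n} {t1 t : ℕ} :
    AvoidEvt n ω i j t1 (t + 1) ↔ AvoidEvt n ω i j t1 t ∧
      (chainMap n ω t i ∉ mergePair n ω t ∧
        (t < t1 → chainMap n ω t j ∉ mergePair n ω t)) := by
  constructor
  · intro h
    exact ⟨fun s hs => h s (by omega), h t (by omega)⟩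
  · rintro ⟨h1, h2⟩ s hs
    rcases Nat.lt_succ_iff_lt_or_eq.1 hs with h' | h'
    · exact h1 s h'
    · subst h'; exact h2

end Counting

section StepLemma

variable {n : ℕ} {i j : Fin n} {t1 t : ℕ}

lemma chainMap_update {s t : ℕ} (ht : t < n - 1) (hst : s ≤ t)
    (ω : Fin (n - 1) → Fin n × Fin n) (p : Fin n × Fin n) (x : Fin n) :
    chainMap n (Function.update ω ⟨t, ht⟩ p) s x = chainMap n ω s x := by
  refine chainMap_congr (fun s' hs' h' => ?_) x
  apply Function.update_of_ne
  intro e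
  have : s' = t := by simpa [Fin.ext_iff] using e
  omega

lemma mergePair_update_lt {s t : ℕ} (ht : t < n - 1) (hst : s < t)
    (ω : Fin (n - 1) → Fin n × Fin n) (p : Fin n × Fin n) :
    mergePair n (Function.update ω ⟨t, ht⟩ p) s = mergePair n ω s := by
  refine mergePair_congr (fun hs => ?_)
  apply Function.update_of_ne
  intro e
  have : s = t := by simpa [Fin.ext_iff] using e
  omega

lemma mergePair_update_self {t : ℕ} (ht : t < n - 1)
    (ω : Fin (n - 1) → Fin n × Fin n) (p : Fin n × Fin n) :
    mergePair n (Function.update ω ⟨t, ht⟩ p) t = {(p.1 : ℕ), (p.2 : ℕ)} := by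
  unfold mergePair
  rw [dif_pos ht, Function.update_self]

/-- The base set used to fiber the counting sets: the coordinate at step `t`
is overwritten with a junk value `d`. -/
noncomputable def baseSet (n : ℕ) (i j : Fin n) (t1 t : ℕ) (ht : t < n - 1)
    (d : Fin n × Fin n) : Finset (Fin (n - 1) → Fin n × Fin n) :=
  Finset.univ.filter (fun ω =>
    (∀ s (hs : s < n - 1), s ≠ t →
      ((ω ⟨s, hs⟩).1 : ℕ) < ((ω ⟨s, hs⟩).2 : ℕ) ∧ ((ω ⟨s, hs⟩).2 : ℕ) < n - s) ∧
    AvoidEvt n ω i j t1 t ∧ ω ⟨t, ht⟩ = d)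

lemma fiber_card (ht : t < n - 1) (d : Fin n × Fin n)
    (ω0 : Fin (n - 1) → Fin n × Fin n) (hω0 : ω0 ∈ baseSet n i j t1 t ht d)
    (g : Finset ℕ) (hg : ∀ x ∈ g, x < n - t) :
    (Finset.univ.filter
      (fun ω : Fin (n - 1) → Fin n × Fin n =>
        (ValidSeq n ω ∧ AvoidEvt n ω i j t1 t ∧
          (∀ x ∈ g, x ∉ mergePair n ω t)) ∧
        Function.update ω ⟨t, ht⟩ d = ω0)).card
      = Nat.choose (n - t - g.card) 2 := by
  classical
  simp only [baseSet, Finset.mem_filter, Finset.mem_univ, true_and] at hω0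
  obtain ⟨hvoff, hav0, hd0⟩ := hω0
  rw [← pairSet_card (n := n) (m := n - t) (Nat.sub_le n t) hg]
  refine (Finset.card_nbij (fun p => Function.update ω0 ⟨t, ht⟩ p) ?_ ?_ ?_).symm
  · intro p hp
    simp only [Finset.mem_coe, pairSet, Finset.mem_filter, Finset.mem_univ, true_and] at hp
    simp only [Finset.mem_coe, Finset.mem_filter, Finset.mem_univ, true_and]
    refine ⟨⟨?_, ?_, ?_⟩, ?_⟩
    · intro s
      by_cases hst : (s : ℕ) = t
      · have : s = ⟨t, ht⟩ := Fin.ext hst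
        subst this
        rw [Function.update_self]
        exact ⟨hp.1.1, by simpa using hp.1.2⟩
      · rw [Function.update_of_ne (fun e => hst (by simpa [Fin.ext_iff] using e))]
        exact hvoff s s.2 hst
    · rw [avoidEvt_congr (ω' := ω0) (fun s' hs' h' =>
        Function.update_of_ne (fun e => by
          have : s' = t := by simpa [Fin.ext_iff] using e
          omega) _ _)]
      exact hav0
    · intro x hx
      rw [mergePair_update_self ht]
      have h1 : x < n - t := hg x hx
      simp only [Finset.mem_insert, Finset.mem_singleton, not_or]
      exact ⟨fun e => hp.2.1 (e ▸ hx), fun e => hp.2.2 (e ▸ hx)⟩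
    · rw [Function.update_idem, ← hd0, Function.update_eq_self]
  · intro p _ q _ hpq
    have := congrFun hpq ⟨t, ht⟩
    simpa [Function.update_self] using this
  · intro ω hω
    simp only [Finset.mem_coe, Finset.mem_filter, Finset.mem_univ, true_and]
      at hω
    obtain ⟨⟨hval, hav, hgc⟩, hF⟩ := hω
    have hcoord : ∀ s : Fin (n - 1), (s : ℕ) ≠ t → ω s = ω0 s := by
      intro s hst
      rw [← hF, Function.update_of_ne (fun e => hst (by simp [Fin.ext_iff] at e; omega))]
    refine ⟨ω ⟨t, ht⟩, ?_, ?_⟩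
    · simp only [Finset.mem_coe, pairSet, Finset.mem_filter, Finset.mem_univ,
        true_and]
      have hvt := hval ⟨t, ht⟩
      refine ⟨⟨hvt.1, by simpa using hvt.2⟩, ?_, ?_⟩ <;>
      · intro hmem
        have := hgc _ hmem
        rw [mergePair] at this
        simp only [dif_pos ht] at this
        simp at this
    · funext s
      simp only
      by_cases hst : (s : ℕ) = t
      · have hs' : s = ⟨t, ht⟩ := Fin.ext hst
        subst hs'
        rw [Function.update_self]
      · rw [Function.update_of_ne (fun e => hst (by simpa [Fin.ext_iff] using e)),
          hcoord s hst]

end StepLemma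

section StepLemma2

variable {n : ℕ} {i j : Fin n} {t1 t : ℕ}

lemma cnt_step (hij : i ≠ j) (ht : t < n - 1) :
    cnt n i j t1 (t + 1) * Nat.choose (n - t) 2
      = cnt n i j t1 t * Nat.choose (n - t - (if t < t1 then 2 else 1)) 2 := by
  classical
  have hn2 : 2 ≤ n := by omega
  set d : Fin n × Fin n := (⟨0, by omega⟩, ⟨0, by omega⟩) with hd
  have hupd_ne : ∀ (ω : Fin (n - 1) → Fin n × Fin n) (s : Fin (n - 1)),
      (s : ℕ) ≠ t → Function.update ω ⟨t, ht⟩ d s = ω s := by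
    intro ω s hst
    exact Function.update_of_ne (fun e => hst (by simpa [Fin.ext_iff] using e)) _ _
  have hinto : ∀ ω : Fin (n - 1) → Fin n × Fin n,
      ValidSeq n ω → AvoidEvt n ω i j t1 t →
      Function.update ω ⟨t, ht⟩ d ∈ baseSet n i j t1 t ht d := by
    intro ω h1 h2
    simp only [baseSet, Finset.mem_filter, Finset.mem_univ, true_and]
    refine ⟨?_, ?_, ?_⟩
    · intro s hs hst
      rw [hupd_ne ω ⟨s, hs⟩ hst]
      exact h1 ⟨s, hs⟩
    · rw [avoidEvt_congr (ω' := ω)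
        (fun s' hs' h' => hupd_ne ω ⟨s', hs'⟩ (by show s' ≠ t; omega))]
      exact h2
    · simp only [Function.update_self]
  have hcount : ∀ (g : (Fin (n - 1) → Fin n × Fin n) → Finset ℕ)
      (w : ℕ)
      (hgw : ∀ ω0 ∈ baseSet n i j t1 t ht d,
        (g ω0).card = w ∧ ∀ x ∈ g ω0, x < n - t)
      (E : (Fin (n - 1) → Fin n × Fin n) → Prop)
      (hE : ∀ ω : Fin (n - 1) → Fin n × Fin n,
        Function.update ω ⟨t, ht⟩ d ∈ baseSet n i j t1 t ht d →
        (E ω ↔ (ValidSeq n ω ∧ AvoidEvt n ω i j t1 t ∧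
          (∀ x ∈ g (Function.update ω ⟨t, ht⟩ d), x ∉ mergePair n ω t))))
      (hE' : ∀ ω : Fin (n - 1) → Fin n × Fin n,
        E ω → ValidSeq n ω ∧ AvoidEvt n ω i j t1 t),
      (Finset.univ.filter E).card
        = (baseSet n i j t1 t ht d).card * Nat.choose (n - t - w) 2 := by
    intro g w hgw E hE hE'
    have hmap : ∀ ω ∈ Finset.univ.filter E,
        Function.update ω ⟨t, ht⟩ d ∈ baseSet n i j t1 t ht d := by
      intro ω hω
      simp only [Finset.mem_filter, Finset.mem_univ, true_and] at hω
      have h2 := hE' ω hω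
      exact hinto ω h2.1 h2.2
    rw [Finset.card_eq_sum_card_fiberwise hmap]
    rw [Finset.sum_congr rfl (fun ω0 hω0 => ?_), Finset.sum_const, smul_eq_mul]
    have heq : (Finset.univ.filter E).filter
          (fun ω : Fin (n - 1) → Fin n × Fin n =>
            Function.update ω ⟨t, ht⟩ d = ω0)
        = Finset.univ.filter
          (fun ω : Fin (n - 1) → Fin n × Fin n =>
            (ValidSeq n ω ∧ AvoidEvt n ω i j t1 t ∧
              (∀ x ∈ g ω0, x ∉ mergePair n ω t)) ∧
            Function.update ω ⟨t, ht⟩ d = ω0) := by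
      ext ω
      simp only [Finset.mem_filter, Finset.mem_univ, true_and]
      constructor
      · rintro ⟨hEω, hFω⟩
        have := (hE ω (hFω ▸ hω0)).1 hEω
        exact ⟨⟨this.1, this.2.1, hFω ▸ this.2.2⟩, hFω⟩
      · rintro ⟨⟨h1, h2, h3⟩, hFω⟩
        refine ⟨(hE ω (hFω ▸ hω0)).2 ⟨h1, h2, hFω ▸ h3⟩, hFω⟩
    rw [heq, fiber_card ht d ω0 hω0 (g ω0) (hgw ω0 hω0).2, (hgw ω0 hω0).1]
  have hA : cnt n i j t1 t
      = (baseSet n i j t1 t ht d).card * Nat.choose (n - t) 2 := by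
    have h := hcount (fun _ => ∅) 0 (fun ω0 _ => by simp)
      (fun ω => ValidSeq n ω ∧ AvoidEvt n ω i j t1 t)
      (fun ω _ => by simp [and_assoc]) (fun ω h => h)
    rw [Nat.sub_zero] at h
    unfold cnt
    convert h using 3
  have hB : cnt n i j t1 (t + 1) = (baseSet n i j t1 t ht d).card
      * Nat.choose (n - t - (if t < t1 then 2 else 1)) 2 := by
    set g : (Fin (n - 1) → Fin n × Fin n) → Finset ℕ := fun ω0 =>
      if t < t1 then {chainMap n ω0 t i, chainMap n ω0 t j}
      else {chainMap n ω0 t i} with hg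
    have hgw : ∀ ω0 ∈ baseSet n i j t1 t ht d,
        (g ω0).card = (if t < t1 then 2 else 1) ∧ ∀ x ∈ g ω0, x < n - t := by
      intro ω0 hω0
      simp only [baseSet, Finset.mem_filter, Finset.mem_univ, true_and] at hω0
      have hvb : ValidBelow n ω0 t := fun s hs h' => hω0.1 s hs (by omega)
      have hlti := chainMap_lt hvb (by omega) i
      have hltj := chainMap_lt hvb (by omega) j
      rw [hg]
      split_ifs with h1
      · have hne : chainMap n ω0 t i ≠ chainMap n ω0 t j :=
          chainMap_ne_of_avoid hvb (by omega) hij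
            (fun s hs => ⟨(hω0.2.1 s hs).1, (hω0.2.1 s hs).2 (by omega)⟩)
        refine ⟨Finset.card_pair hne, ?_⟩
        intro x hx
        simp only [Finset.mem_insert, Finset.mem_singleton] at hx
        rcases hx with h | h <;> subst h <;> assumption
      · refine ⟨Finset.card_singleton _, ?_⟩
        intro x hx
        simp only [Finset.mem_singleton] at hx
        subst hx; assumption
    have hEiff : ∀ ω : Fin (n - 1) → Fin n × Fin n,
        Function.update ω ⟨t, ht⟩ d ∈ baseSet n i j t1 t ht d →
        ((ValidSeq n ω ∧ AvoidEvt n ω i j t1 (t + 1)) ↔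
          (ValidSeq n ω ∧ AvoidEvt n ω i j t1 t ∧
            (∀ x ∈ g (Function.update ω ⟨t, ht⟩ d), x ∉ mergePair n ω t))) := by
      intro ω hωb
      have hci : chainMap n (Function.update ω ⟨t, ht⟩ d) t i
          = chainMap n ω t i := chainMap_update ht le_rfl ω d i
      have hcj : chainMap n (Function.update ω ⟨t, ht⟩ d) t j
          = chainMap n ω t j := chainMap_update ht le_rfl ω d j
      rw [avoidEvt_succ]
      constructor
      · rintro ⟨hv, hav, havt⟩
        refine ⟨hv, hav, ?_⟩
        intro x hx
        rw [hg] at hx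
        split_ifs at hx with h1 <;> simp only [Finset.mem_insert,
          Finset.mem_singleton] at hx
        · rcases hx with h | h <;> subst h
          · rw [hci]; exact havt.1
          · rw [hcj]; exact havt.2 h1
        · subst hx; rw [hci]; exact havt.1
      · rintro ⟨hv, hav, hgc⟩
        refine ⟨hv, hav, ?_, ?_⟩
        · have := hgc (chainMap n (Function.update ω ⟨t, ht⟩ d) t i) ?_
          · rwa [hci] at this
          · rw [hg]; split_ifs <;> simp
        · intro h1
          have := hgc (chainMap n (Function.update ω ⟨t, ht⟩ d) t j) ?_
          · rwa [hcj] at this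
          · rw [hg]; simp [h1]
    have h := hcount g (if t < t1 then 2 else 1) hgw
      (fun ω => ValidSeq n ω ∧ AvoidEvt n ω i j t1 (t + 1)) hEiff
      (fun ω h => ⟨h.1, fun s hs => h.2 s (by omega)⟩)
    unfold cnt
    convert h using 3
  rw [hA, hB]; ring

end StepLemma2

section GrandCount

variable {n : ℕ} {i j : Fin n} {t1 : ℕ}

/-- products of per-step pair counts -/
noncomputable def prodA (n t : ℕ) : ℕ := ∏ s ∈ Finset.range t, Nat.choose (n - s) 2
noncomputable def prodW (n t1 t : ℕ) : ℕ :=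
  ∏ s ∈ Finset.range t, Nat.choose (n - s - (if s < t1 then 2 else 1)) 2
noncomputable def prodB (n t : ℕ) : ℕ :=
  ∏ s ∈ Finset.range t, Nat.choose (n - s - 1) 2

lemma prodW_zero_t1 (n t : ℕ) : prodW n 0 t = prodB n t := by
  unfold prodW prodB
  exact Finset.prod_congr rfl (fun s _ => by simp)

lemma cnt_zero : cnt n i j t1 0 = (coalSpace n).card := by
  classical
  unfold cnt coalSpace
  congr 1
  ext ω
  simp only [Finset.mem_filter, Finset.mem_univ, true_and, and_iff_left_iff_imp]
  intro _ s hs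
  omega

lemma cnt_prod (hij : i ≠ j) {t : ℕ} (ht : t ≤ n - 1) :
    cnt n i j t1 t * prodA n t = (coalSpace n).card * prodW n t1 t := by
  induction t with
  | zero => simp [prodA, prodW, cnt_zero]
  | succ u ih =>
    have hu : u < n - 1 := by omega
    have hstep := cnt_step (t1 := t1) hij hu
    unfold prodA prodW
    rw [Finset.prod_range_succ, Finset.prod_range_succ, ← mul_assoc, mul_comm (cnt n i j t1 (u+1)) _]
    calc (∏ s ∈ Finset.range u, Nat.choose (n - s) 2) * cnt n i j t1 (u + 1)
          * Nat.choose (n - u) 2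
        = (∏ s ∈ Finset.range u, Nat.choose (n - s) 2) *
            (cnt n i j t1 u * Nat.choose (n - u - (if u < t1 then 2 else 1)) 2) := by
          rw [mul_assoc, hstep]
      _ = (cnt n i j t1 u * prodA n u) * Nat.choose (n - u - (if u < t1 then 2 else 1)) 2 := by
          unfold prodA; ring
      _ = ((coalSpace n).card * prodW n t1 u) * Nat.choose (n - u - (if u < t1 then 2 else 1)) 2 := by
          rw [ih (by omega)]
      _ = (coalSpace n).card *
            ((∏ s ∈ Finset.range u, Nat.choose (n - s - (if s < t1 then 2 else 1)) 2) *
              Nat.choose (n - u - (if u < t1 then 2 else 1)) 2) := by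
          unfold prodW; ring

lemma prodB_identity (n : ℕ) : ∀ t, prodB n t * Nat.choose n 2
    = prodA n t * Nat.choose (n - t) 2 := by
  intro t
  induction t with
  | zero => simp [prodA, prodB]
  | succ u ih =>
    unfold prodA prodB at *
    rw [Finset.prod_range_succ, Finset.prod_range_succ]
    have h : n - (u + 1) = n - u - 1 := by omega
    rw [h]
    calc (∏ s ∈ Finset.range u, Nat.choose (n - s - 1) 2) * Nat.choose (n - u - 1) 2
          * Nat.choose n 2
        = ((∏ s ∈ Finset.range u, Nat.choose (n - s - 1) 2) * Nat.choose n 2)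
            * Nat.choose (n - u - 1) 2 := by ring
      _ = ((∏ s ∈ Finset.range u, Nat.choose (n - s) 2) * Nat.choose (n - u) 2)
            * Nat.choose (n - u - 1) 2 := by rw [ih]
      _ = _ := by ring

lemma prodW_identity_phase1 (n t1 : ℕ) : ∀ t ≤ t1,
    prodW n t1 t * (Nat.choose n 2 * Nat.choose (n - 1) 2)
      = prodA n t * (Nat.choose (n - t) 2 * Nat.choose (n - t - 1) 2) := by
  intro t
  induction t with
  | zero => simp [prodA, prodW]
  | succ u ih =>
    intro ht
    have h1 : u < t1 := by omega
    unfold prodA prodW at *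
    rw [Finset.prod_range_succ, Finset.prod_range_succ, if_pos h1]
    have h2 : n - (u + 1) = n - u - 1 := by omega
    have h3 : n - u - 1 - 1 = n - u - 2 := by omega
    rw [h2, h3]
    calc (∏ s ∈ Finset.range u, Nat.choose (n - s - if s < t1 then 2 else 1) 2)
          * Nat.choose (n - u - 2) 2 * (Nat.choose n 2 * Nat.choose (n - 1) 2)
        = ((∏ s ∈ Finset.range u, Nat.choose (n - s - if s < t1 then 2 else 1) 2)
            * (Nat.choose n 2 * Nat.choose (n - 1) 2)) * Nat.choose (n - u - 2) 2 := by
          ring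
      _ = ((∏ s ∈ Finset.range u, Nat.choose (n - s) 2)
            * (Nat.choose (n - u) 2 * Nat.choose (n - u - 1) 2)) * Nat.choose (n - u - 2) 2 := by
          rw [ih (by omega)]
      _ = _ := by ring

lemma prodW_identity_phase2 (n t1 : ℕ) : ∀ t, t1 ≤ t →
    prodW n t1 t * (Nat.choose n 2 * Nat.choose (n - 1) 2)
      = prodA n t * (Nat.choose (n - t) 2 * Nat.choose (n - t1 - 1) 2) := by
  intro t
  induction t with
  | zero =>
    intro ht
    have : t1 = 0 := by omega
    subst this
    simp [prodA, prodW]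
  | succ u ih =>
    intro ht
    rcases Nat.lt_or_ge t1 (u + 1) with h1 | h1
    · have h1' : ¬ (u < t1) := by omega
      unfold prodA prodW at *
      rw [Finset.prod_range_succ, Finset.prod_range_succ, if_neg h1']
      have h2 : n - (u + 1) = n - u - 1 := by omega
      rw [h2]
      calc (∏ s ∈ Finset.range u, Nat.choose (n - s - if s < t1 then 2 else 1) 2)
            * Nat.choose (n - u - 1) 2 * (Nat.choose n 2 * Nat.choose (n - 1) 2)
          = ((∏ s ∈ Finset.range u, Nat.choose (n - s - if s < t1 then 2 else 1) 2)
              * (Nat.choose n 2 * Nat.choose (n - 1) 2)) * Nat.choose (n - u - 1) 2 := by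
            ring
        _ = ((∏ s ∈ Finset.range u, Nat.choose (n - s) 2)
              * (Nat.choose (n - u) 2 * Nat.choose (n - t1 - 1) 2))
                * Nat.choose (n - u - 1) 2 := by
            rw [ih (by omega)]
        _ = _ := by ring
    · have h1' : t1 = u + 1 := by omega
      subst h1'
      exact prodW_identity_phase1 n (u + 1) (u + 1) le_rfl

end GrandCount

section Events

variable {n : ℕ} {ω : Fin (n - 1) → Fin n × Fin n} {i j : Fin n}

lemma zext_iff_avoid (hval : ValidSeq n ω) {k : ℕ} (hk : 1 ≤ k) (hkn : k ≤ n) :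
    Zext n ω i k ↔ ∀ s < n - k, chainMap n ω s i ∉ mergePair n ω s := by
  rw [zext_iff_ext]
  exact ext_iff_avoid (validSeq_validBelow hval (n - k)) (by omega) i

lemma zext_pair_iff (hval : ValidSeq n ω) {k l : ℕ} (hk : 1 ≤ k) (hkl : k ≤ l)
    (hl : l ≤ n) :
    (Zext n ω i k ∧ Zext n ω j l) ↔ AvoidEvt n ω i j (n - l) (n - k) := by
  rw [zext_iff_avoid hval hk (by omega), zext_iff_avoid hval (by omega) hl]
  constructor
  · rintro ⟨h1, h2⟩ s hs
    exact ⟨h1 s hs, fun hs' => h2 s hs'⟩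
  · intro h
    exact ⟨fun s hs => (h s hs).1, fun s hs => (h s (by omega)).2 hs⟩

lemma zext_single_iff (hval : ValidSeq n ω) {k : ℕ} (hk : 1 ≤ k) (hkn : k ≤ n) :
    Zext n ω i k ↔ AvoidEvt n ω i j 0 (n - k) := by
  rw [zext_iff_avoid hval hk hkn]
  constructor
  · intro h s hs
    exact ⟨h s hs, fun hs' => absurd hs' (by omega)⟩
  · intro h s hs
    exact (h s hs).1

lemma zext_mono (hval : ValidSeq n ω) {k l : ℕ} (hk : 1 ≤ k) (hkl : k ≤ l)
    (hl : l ≤ n) (h : Zext n ω i k) : Zext n ω i l := by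
  rw [zext_iff_avoid hval hk (by omega)] at h
  rw [zext_iff_avoid hval (by omega) hl]
  intro s hs
  exact h s (by omega)

lemma card_pair_count (hij : i ≠ j) {k l : ℕ} (hk : 1 ≤ k) (hn : 1 ≤ n)
    (hkl : k ≤ l) (hl : l ≤ n) :
    ((coalSpace n).filter
        (fun ω => Zext n ω i k ∧ Zext n ω j l)).card * prodA n (n - k)
      = (coalSpace n).card * prodW n (n - l) (n - k) := by
  classical
  have h1 : (coalSpace n).filter (fun ω => Zext n ω i k ∧ Zext n ω j l)
      = Finset.univ.filter (fun ω => ValidSeq n ω ∧ AvoidEvt n ω i j (n - l) (n - k)) := by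
    ext ω
    simp only [coalSpace, Finset.mem_filter, Finset.mem_univ, true_and, and_congr_right_iff]
    intro hval
    exact zext_pair_iff hval hk hkl hl
  rw [h1]
  exact cnt_prod hij (by omega)

lemma card_single_count (hij : i ≠ j) {k : ℕ} (hk : 1 ≤ k) (hn : 1 ≤ n) (hkn : k ≤ n) :
    ((coalSpace n).filter (fun ω => Zext n ω i k)).card * prodA n (n - k)
      = (coalSpace n).card * prodB n (n - k) := by
  classical
  have h1 : (coalSpace n).filter (fun ω => Zext n ω i k)
      = Finset.univ.filter (fun ω => ValidSeq n ω ∧ AvoidEvt n ω i j 0 (n - k)) := by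
    ext ω
    simp only [coalSpace, Finset.mem_filter, Finset.mem_univ, true_and, and_congr_right_iff]
    intro hval
    exact zext_single_iff hval hk (by omega)
  rw [h1, ← prodW_zero_t1]
  exact cnt_prod hij (by omega)

lemma coalSpace_nonempty (hn : 2 ≤ n) : 0 < (coalSpace n).card := by
  rw [Finset.card_pos]
  refine ⟨fun s => (⟨0, by omega⟩, ⟨1, by omega⟩), ?_⟩
  simp only [coalSpace, Finset.mem_filter, Finset.mem_univ, true_and]
  intro s
  simp only
  constructor
  · simp
  · have := s.2
    simp
    omega

lemma prodA_pos (hn : 1 ≤ n) {t : ℕ} (ht : t ≤ n - 1) : 0 < prodA n t := by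
  unfold prodA
  apply Finset.prod_pos
  intro s hs
  simp only [Finset.mem_range] at hs
  exact Nat.choose_pos (by omega)

end Events

section Sums

variable {n k l : ℕ}

lemma diag_filter_eq (hk : 1 ≤ k) (hkl : k ≤ l) (hl : l ≤ n) (i : Fin n) :
    (coalSpace n).filter (fun ω => Zext n ω i k ∧ Zext n ω i l)
      = (coalSpace n).filter (fun ω => Zext n ω i k) := by
  classical
  ext ω
  simp only [coalSpace, Finset.mem_filter, Finset.mem_univ, true_and,
    and_congr_right_iff]
  intro hval
  exact ⟨fun h => h.1, fun h => ⟨h, zext_mono hval hk hkl hl h⟩⟩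

set_option maxHeartbeats 1000000 in
lemma sum_single_card (hn : 3 ≤ n) (hk : 2 ≤ k) (hkn : k ≤ n) :
    (∑ ω ∈ coalSpace n,
        (Finset.univ.filter (fun i => Zext n ω i k)).card) * prodA n (n - k)
      = n * ((coalSpace n).card * prodB n (n - k)) := by
  classical
  have h1 : ∀ ω : Fin (n - 1) → Fin n × Fin n,
      (Finset.univ.filter (fun i => Zext n ω i k)).card
        = ∑ i : Fin n, if Zext n ω i k then 1 else 0 :=
    fun ω => Finset.card_filter _ _
  calc (∑ ω ∈ coalSpace n,
        (Finset.univ.filter (fun i => Zext n ω i k)).card) * prodA n (n - k)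
      = (∑ i : Fin n, ((coalSpace n).filter (fun ω => Zext n ω i k)).card)
          * prodA n (n - k) := by
        rw [Finset.sum_congr rfl (fun ω _ => h1 ω), Finset.sum_comm]
        congr 1
        exact Finset.sum_congr rfl (fun i _ => (Finset.card_filter _ _).symm)
    _ = ∑ i : Fin n, ((coalSpace n).filter (fun ω => Zext n ω i k)).card
          * prodA n (n - k) := by rw [Finset.sum_mul]
    _ = ∑ i : Fin n, (coalSpace n).card * prodB n (n - k) := by
        refine Finset.sum_congr rfl (fun i _ => ?_)
        have : Nontrivial (Fin n) := Fin.nontrivial_iff_two_le.2 (by omega)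
        obtain ⟨j, hj⟩ := exists_ne i
        exact card_single_count (Ne.symm hj) (by omega) (by omega) (by omega)
    _ = n * ((coalSpace n).card * prodB n (n - k)) := by
        rw [Finset.sum_const, Finset.card_univ, Fintype.card_fin, smul_eq_mul]

set_option maxHeartbeats 1000000 in
lemma sum_pair_card (hn : 3 ≤ n) (hk : 2 ≤ k) (hkl : k ≤ l) (hl : l ≤ n) :
    (∑ ω ∈ coalSpace n,
        (Finset.univ.filter (fun i => Zext n ω i k)).card
          * (Finset.univ.filter (fun j => Zext n ω j l)).card) * prodA n (n - k)
      = n * ((coalSpace n).card * prodB n (n - k))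
        + (n * (n - 1)) * ((coalSpace n).card * prodW n (n - l) (n - k)) := by
  classical
  have h1 : ∀ ω : Fin (n - 1) → Fin n × Fin n,
      (Finset.univ.filter (fun i => Zext n ω i k)).card
        * (Finset.univ.filter (fun j => Zext n ω j l)).card
      = ∑ i : Fin n, ∑ j : Fin n,
          if Zext n ω i k ∧ Zext n ω j l then 1 else 0 := by
    intro ω
    rw [Finset.card_filter, Finset.card_filter, Finset.sum_mul_sum]
    refine Finset.sum_congr rfl (fun i _ => Finset.sum_congr rfl (fun j _ => ?_))
    by_cases hP : Zext n ω i k <;> by_cases hQ : Zext n ω j l <;> simp [hP, hQ]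
  have h2 : (∑ ω ∈ coalSpace n,
      (Finset.univ.filter (fun i => Zext n ω i k)).card
        * (Finset.univ.filter (fun j => Zext n ω j l)).card)
      = ∑ i : Fin n, ∑ j : Fin n,
          ((coalSpace n).filter (fun ω => Zext n ω i k ∧ Zext n ω j l)).card := by
    rw [Finset.sum_congr rfl (fun ω _ => h1 ω), Finset.sum_comm]
    refine Finset.sum_congr rfl (fun i _ => ?_)
    rw [Finset.sum_comm]
    exact Finset.sum_congr rfl (fun j _ => (Finset.card_filter _ _).symm)
  rw [h2, Finset.sum_mul]
  have h3 : ∀ i : Fin n,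
      (∑ j : Fin n,
        ((coalSpace n).filter (fun ω => Zext n ω i k ∧ Zext n ω j l)).card)
        * prodA n (n - k)
      = (coalSpace n).card * prodB n (n - k)
        + (n - 1) * ((coalSpace n).card * prodW n (n - l) (n - k)) := by
    intro i
    rw [← Finset.sum_erase_add _ _ (Finset.mem_univ i), add_mul]
    have hdiag : ((coalSpace n).filter
        (fun ω => Zext n ω i k ∧ Zext n ω i l)).card * prodA n (n - k)
        = (coalSpace n).card * prodB n (n - k) := by
      rw [diag_filter_eq (by omega) hkl hl i]
      have : Nontrivial (Fin n) := Fin.nontrivial_iff_two_le.2 (by omega)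
      obtain ⟨j, hj⟩ := exists_ne i
      exact card_single_count (Ne.symm hj) (by omega) (by omega) (by omega)
    have hoff : (∑ j ∈ Finset.univ.erase i,
        ((coalSpace n).filter (fun ω => Zext n ω i k ∧ Zext n ω j l)).card)
          * prodA n (n - k)
        = (n - 1) * ((coalSpace n).card * prodW n (n - l) (n - k)) := by
      rw [Finset.sum_mul]
      rw [Finset.sum_congr rfl (fun j hj => card_pair_count
        (Ne.symm (Finset.ne_of_mem_erase hj)) (by omega) (by omega) hkl hl)]
      rw [Finset.sum_const, smul_eq_mul, Finset.card_erase_of_mem (Finset.mem_univ i),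
        Finset.card_univ, Fintype.card_fin]
    rw [hdiag, hoff]
    ring
  rw [Finset.sum_congr rfl (fun i _ => h3 i), Finset.sum_add_distrib,
    Finset.sum_const, Finset.sum_const, Finset.card_univ, Fintype.card_fin,
    smul_eq_mul, smul_eq_mul]
  ring

end Sums

set_option maxHeartbeats 1000000 in
theorem yule_fmat_same_row_covariance' (n k l : ℕ) (hn : 3 ≤ n)
    (hk : 2 ≤ k) (hkl : k ≤ l) (hl : l ≤ n) :
    coalE n (fun ω => (FmatOf n ω (n - 1) (k - 1) : ℝ) *
        (FmatOf n ω (n - 1) (l - 1) : ℝ)) -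
      coalE n (fun ω => (FmatOf n ω (n - 1) (k - 1) : ℝ)) *
        coalE n (fun ω => (FmatOf n ω (n - 1) (l - 1) : ℝ)) =
    (k : ℝ) * ((k : ℝ) - 1) *
        ((l : ℝ) * ((l : ℝ) + 1) + (n : ℝ) * ((n : ℝ) - 2 * (l : ℝ) - 1)) /
      (((n : ℝ) - 1) ^ 2 * ((n : ℝ) - 2)) := by
  classical
  have hln : 2 ≤ l := le_trans hk hkl
  have hkn : k ≤ n := le_trans hkl hl
  -- natural number count data
  set N := (coalSpace n).card with hN
  set Ak := prodA n (n - k) with hAk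
  set Al := prodA n (n - l) with hAl
  set Bk := prodB n (n - k) with hBk
  set Bl := prodB n (n - l) with hBl
  set W := prodW n (n - l) (n - k) with hW
  set Sk := ∑ ω ∈ coalSpace n, (Finset.univ.filter (fun i => Zext n ω i k)).card
    with hSk
  set Sl := ∑ ω ∈ coalSpace n, (Finset.univ.filter (fun i => Zext n ω i l)).card
    with hSl
  set Skl := ∑ ω ∈ coalSpace n,
    (Finset.univ.filter (fun i => Zext n ω i k)).card
      * (Finset.univ.filter (fun j => Zext n ω j l)).card with hSkl
  have s1 : Sk * Ak = n * (N * Bk) := sum_single_card hn hk hkn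
  have s2 : Sl * Al = n * (N * Bl) := sum_single_card hn hln hl
  have s3 : Skl * Ak = n * (N * Bk) + (n * (n - 1)) * (N * W) :=
    sum_pair_card hn hk hkl hl
  have i1 : Bk * Nat.choose n 2 = Ak * Nat.choose k 2 := by
    have := prodB_identity n (n - k)
    rwa [show n - (n - k) = k by omega] at this
  have i2 : Bl * Nat.choose n 2 = Al * Nat.choose l 2 := by
    have := prodB_identity n (n - l)
    rwa [show n - (n - l) = l by omega] at this
  have i3 : W * (Nat.choose n 2 * Nat.choose (n - 1) 2)
      = Ak * (Nat.choose k 2 * Nat.choose (l - 1) 2) := by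
    have := prodW_identity_phase2 n (n - l) (n - k) (by omega)
    rwa [show n - (n - k) = k by omega, show n - (n - l) - 1 = l - 1 by omega]
      at this
  -- positivity
  have hNpos : 0 < N := coalSpace_nonempty (by omega)
  have hAkpos : 0 < Ak := prodA_pos (by omega) (by omega)
  have hAlpos : 0 < Al := prodA_pos (by omega) (by omega)
  have hCn : 0 < Nat.choose n 2 := Nat.choose_pos (by omega)
  have hCn1 : 0 < Nat.choose (n - 1) 2 := Nat.choose_pos (by omega)
  -- move to the reals
  have rs1 : (Sk : ℝ) * Ak = n * (N * Bk) := by exact_mod_cast congrArg Nat.cast s1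
  have rs2 : (Sl : ℝ) * Al = n * (N * Bl) := by exact_mod_cast congrArg Nat.cast s2
  have rs3 : (Skl : ℝ) * Ak = n * (N * Bk) + (n * ((n : ℝ) - 1)) * (N * W) := by
    have := congrArg (Nat.cast : ℕ → ℝ) s3
    push_cast at this
    rwa [Nat.cast_sub (by omega : 1 ≤ n), Nat.cast_one] at this
  have ri1 : (Bk : ℝ) * Nat.choose n 2 = Ak * Nat.choose k 2 := by
    exact_mod_cast congrArg Nat.cast i1
  have ri2 : (Bl : ℝ) * Nat.choose n 2 = Al * Nat.choose l 2 := by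
    exact_mod_cast congrArg Nat.cast i2
  have ri3 : (W : ℝ) * (Nat.choose n 2 * Nat.choose (n - 1) 2)
      = Ak * (Nat.choose k 2 * Nat.choose (l - 1) 2) := by
    exact_mod_cast congrArg Nat.cast i3
  have hNne : (N : ℝ) ≠ 0 := Nat.cast_ne_zero.2 (by omega)
  have hAkne : (Ak : ℝ) ≠ 0 := Nat.cast_ne_zero.2 (by omega)
  have hAlne : (Al : ℝ) ≠ 0 := Nat.cast_ne_zero.2 (by omega)
  have hCnne : ((Nat.choose n 2 : ℕ) : ℝ) ≠ 0 := Nat.cast_ne_zero.2 (by omega)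
  have hCn1ne : ((Nat.choose (n - 1) 2 : ℕ) : ℝ) ≠ 0 := Nat.cast_ne_zero.2 (by omega)
  -- closed forms for the sums
  have eSk : (Sk : ℝ) = n * N * Nat.choose k 2 / Nat.choose n 2 := by
    rw [eq_div_iff hCnne]
    have h := congrArg (· * ((Nat.choose n 2 : ℕ) : ℝ)) rs1
    have h2 : (Sk : ℝ) * Nat.choose n 2 * Ak
        = n * N * Nat.choose k 2 * Ak := by
      calc (Sk : ℝ) * Nat.choose n 2 * Ak = (Sk : ℝ) * Ak * Nat.choose n 2 := by ring
        _ = n * (N * Bk) * Nat.choose n 2 := by rw [rs1]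
        _ = n * N * ((Bk : ℝ) * Nat.choose n 2) := by ring
        _ = n * N * ((Ak : ℝ) * Nat.choose k 2) := by rw [ri1]
        _ = n * N * Nat.choose k 2 * Ak := by ring
    exact mul_right_cancel₀ hAkne h2
  have eSl : (Sl : ℝ) = n * N * Nat.choose l 2 / Nat.choose n 2 := by
    rw [eq_div_iff hCnne]
    have h2 : (Sl : ℝ) * Nat.choose n 2 * Al
        = n * N * Nat.choose l 2 * Al := by
      calc (Sl : ℝ) * Nat.choose n 2 * Al = (Sl : ℝ) * Al * Nat.choose n 2 := by ring
        _ = n * (N * Bl) * Nat.choose n 2 := by rw [rs2]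
        _ = n * N * ((Bl : ℝ) * Nat.choose n 2) := by ring
        _ = n * N * ((Al : ℝ) * Nat.choose l 2) := by rw [ri2]
        _ = n * N * Nat.choose l 2 * Al := by ring
    exact mul_right_cancel₀ hAlne h2
  have eSkl : (Skl : ℝ) = (n * N * Nat.choose k 2 * Nat.choose (n - 1) 2
      + n * ((n : ℝ) - 1) * N * (Nat.choose k 2 * Nat.choose (l - 1) 2))
        / (Nat.choose n 2 * Nat.choose (n - 1) 2) := by
    rw [eq_div_iff (mul_ne_zero hCnne hCn1ne)]
    have h2 : (Skl : ℝ) * (Nat.choose n 2 * Nat.choose (n - 1) 2) * Ak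
        = (n * N * Nat.choose k 2 * Nat.choose (n - 1) 2
          + n * ((n : ℝ) - 1) * N * (Nat.choose k 2 * Nat.choose (l - 1) 2)) * Ak := by
      calc (Skl : ℝ) * (Nat.choose n 2 * Nat.choose (n - 1) 2) * Ak
          = ((Skl : ℝ) * Ak) * Nat.choose n 2 * Nat.choose (n - 1) 2 := by ring
        _ = (n * (N * Bk) + (n * ((n : ℝ) - 1)) * (N * W))
              * Nat.choose n 2 * Nat.choose (n - 1) 2 := by rw [rs3]
        _ = n * N * ((Bk : ℝ) * Nat.choose n 2) * Nat.choose (n - 1) 2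
              + n * ((n : ℝ) - 1) * N
                * ((W : ℝ) * (Nat.choose n 2 * Nat.choose (n - 1) 2)) := by ring
        _ = n * N * ((Ak : ℝ) * Nat.choose k 2) * Nat.choose (n - 1) 2
              + n * ((n : ℝ) - 1) * N
                * ((Ak : ℝ) * (Nat.choose k 2 * Nat.choose (l - 1) 2)) := by
            rw [ri1, ri3]
        _ = _ := by ring
    exact mul_right_cancel₀ hAkne h2
  -- expectations
  have hsum1 : ∑ ω ∈ coalSpace n, (FmatOf n ω (n - 1) (k - 1) : ℝ) = (Sk : ℝ) := by
    rw [hSk, Nat.cast_sum]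
    refine Finset.sum_congr rfl (fun ω _ => ?_)
    rw [fmat_card (by omega) (by omega)]
  have hsum2 : ∑ ω ∈ coalSpace n, (FmatOf n ω (n - 1) (l - 1) : ℝ) = (Sl : ℝ) := by
    rw [hSl, Nat.cast_sum]
    refine Finset.sum_congr rfl (fun ω _ => ?_)
    rw [fmat_card (by omega) (by omega)]
  have hsum3 : ∑ ω ∈ coalSpace n,
      ((FmatOf n ω (n - 1) (k - 1) : ℝ) * (FmatOf n ω (n - 1) (l - 1) : ℝ))
        = (Skl : ℝ) := by
    rw [hSkl, Nat.cast_sum]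
    refine Finset.sum_congr rfl (fun ω _ => ?_)
    rw [fmat_card (by omega) (by omega), fmat_card (by omega) (by omega)]
    push_cast
    ring
  have h1 : (n : ℝ) ≠ 0 := by positivity
  have h2 : (n : ℝ) - 1 ≠ 0 := by
    have : (3 : ℝ) ≤ (n : ℝ) := by exact_mod_cast hn
    nlinarith
  have h3 : (n : ℝ) - 2 ≠ 0 := by
    have : (3 : ℝ) ≤ (n : ℝ) := by exact_mod_cast hn
    nlinarith
  have eEk : (Sk : ℝ) / N = (k : ℝ) * ((k : ℝ) - 1) / ((n : ℝ) - 1) := by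
    rw [eSk, Nat.cast_choose_two, Nat.cast_choose_two]
    field_simp
  have eEl : (Sl : ℝ) / N = (l : ℝ) * ((l : ℝ) - 1) / ((n : ℝ) - 1) := by
    rw [eSl, Nat.cast_choose_two, Nat.cast_choose_two]
    field_simp
  have eEkl : (Skl : ℝ) / N = (k : ℝ) * ((k : ℝ) - 1) / ((n : ℝ) - 1)
      + (k : ℝ) * ((k : ℝ) - 1) * ((l : ℝ) - 1) * ((l : ℝ) - 2)
        / (((n : ℝ) - 1) * ((n : ℝ) - 2)) := by
    rw [eSkl, Nat.cast_choose_two, Nat.cast_choose_two, Nat.cast_choose_two,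
      Nat.cast_choose_two, Nat.cast_sub (by omega : 1 ≤ n),
      Nat.cast_sub (by omega : 1 ≤ l), Nat.cast_one]
    have hd : ((n : ℝ) * ((n : ℝ) - 1) / 2 * (((n : ℝ) - 1) * ((n : ℝ) - 1 - 1) / 2))
        * (N : ℝ) ≠ 0 := by
      refine mul_ne_zero (mul_ne_zero ?_ ?_) hNne
      · exact div_ne_zero (mul_ne_zero h1 h2) two_ne_zero
      · exact div_ne_zero (mul_ne_zero h2 (by rw [show (n:ℝ)-1-1 = (n:ℝ)-2 by ring]; exact h3)) two_ne_zero
    rw [div_div, div_eq_iff hd]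
    field_simp
    ring
  unfold coalE
  rw [hsum1, hsum2, hsum3, eEkl, eEk, eEl]
  field_simp
  ring

/-- Under the Yule model with `n` leaves, for `k ≤ l` the
covariance of same-row F-matrix entries is
`Cov(F_{n-1,k-1}, F_{n-1,l-1}) = k(k-1)[l(l+1) + n(n-2l-1)] / ((n-1)²(n-2))`. -/
theorem yule_fmat_same_row_covariance (n k l : ℕ) (hn : 3 ≤ n)
    (hk : 2 ≤ k) (hkl : k ≤ l) (hl : l ≤ n) :
    coalE n (fun ω => (FmatOf n ω (n - 1) (k - 1) : ℝ) *
        (FmatOf n ω (n - 1) (l - 1) : ℝ)) -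
      coalE n (fun ω => (FmatOf n ω (n - 1) (k - 1) : ℝ)) *
        coalE n (fun ω => (FmatOf n ω (n - 1) (l - 1) : ℝ)) =
    (k : ℝ) * ((k : ℝ) - 1) *
        ((l : ℝ) * ((l : ℝ) + 1) + (n : ℝ) * ((n : ℝ) - 2 * (l : ℝ) - 1)) /
      (((n : ℝ) - 1) ^ 2 * ((n : ℝ) - 2)) := by
  exact yule_fmat_same_row_covariance' n k l hn hk hkl hl
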